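/- If the matching factor at position i of S has an occurrence starting at position p_i in R (i.e., R[p_i..p_i+ℓ_i−1] = S[i..i+ℓ_i−1] and ℓ_i is maximal such that S[i..i+ℓ_i−1] occurs in R), and ℓ_i > 0, then R[p_i+1..p_i+ℓ_i−1] is a prefix of S[i+1..] occurring in R, hence ℓ_{i+1} ≥ ℓ_i − 1 and if ℓ_{i+1} = ℓ_i − 1 then p_i + 1 is a valid occurrence for position i+1. -/
import Mathlib


open List

/-- `ℓ` is the matching-statistics length of `S` w.r.t. `R` at position `i`. -/
def IsMSLen {α : Type*} (R S : List α) (i ℓ : ℕ) : Prop :=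
  ((S.drop i).take ℓ) <:+: R ∧ ℓ ≤ (S.drop i).length ∧
    ∀ k, k ≤ (S.drop i).length → ((S.drop i).take k) <:+: R → k ≤ ℓ

theorem stmt1 {α : Type*} (R S : List α) (i ℓ ℓ' p : ℕ)
    (h : IsMSLen R S i ℓ) (hpos : 0 < ℓ)
    (hocc : ((S.drop i).take ℓ) <+: R.drop p)
    (h' : IsMSLen R S (i + 1) ℓ') :
    ((S.drop (i + 1)).take (ℓ - 1)) <+: R.drop (p + 1) ∧
    ((S.drop (i + 1)).take (ℓ - 1)) <:+: R ∧
    ℓ - 1 ≤ ℓ' ∧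
    (ℓ' = ℓ - 1 → ((S.drop (i + 1)).take ℓ') <+: R.drop (p + 1)) := by
  have key : (S.drop (i + 1)).take (ℓ - 1) = ((S.drop i).take ℓ).drop 1 := by
    rw [List.drop_take, List.drop_drop]
  have h1 : ((S.drop (i + 1)).take (ℓ - 1)) <+: R.drop (p + 1) := by
    rw [key, ← List.drop_drop]
    exact hocc.drop 1
  have h2 : ((S.drop (i + 1)).take (ℓ - 1)) <:+: R := by
    rw [key]
    exact (List.drop_suffix 1 _).isInfix.trans h.1
  have hlen : ℓ - 1 ≤ (S.drop (i + 1)).length := by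
    have := h.2.1
    simp only [List.length_drop] at this ⊢
    omega
  have h3 : ℓ - 1 ≤ ℓ' := h'.2.2 _ hlen h2
  exact ⟨h1, h2, h3, fun he => he ▸ h1⟩
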